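/- For the partial abelian monoid ℕ (natural numbers with full addition, which is a total abelian monoid) and a pointed set X with trivial partial sum, every element of X ⊗ ℕ is represented by a multiset (x₁,1) ∔ … ∔ (x_k,1) with the x_i nonzero, and two such representatives give the same class iff they agree as multisets of elements of X∖{0}; hence X ⊗ ℕ is in bijection with the set of finite multisets of nonbasepoint elements of X (the underlying set of the infinite symmetric product SP^∞(X)). -/

import Mathlib

/-- Pairwise insummability for the trivial partial abelian monoid on a pointed
set: every two-element sub-multiset has both entries non-basepoint. -/
def PInsum {A : Type*} (z : A) (s : Multiset A) : Prop :=
  ∀ a b : A, a ::ₘ {b} ≤ s → ¬(a = z ∨ b = z)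

/-- Summability of a multiset in the trivial partial abelian monoid: at most
one entry is non-basepoint. -/
def TrivSumm {A : Type*} (z : A) (s : Multiset A) : Prop :=
  ∀ a b : A, a ::ₘ {b} ≤ s → (a = z ∨ b = z)

/-- Pairwise insummability in `ℕ` with total addition: no pair is insummable,
so a multiset is pairwise insummable only if it has no two-element sub-multiset. -/
def PInsumNat (s : Multiset ℕ) : Prop :=
  ∀ a b : ℕ, a ::ₘ {b} ≤ s → False

/-- The admissible multisets `T(X,ℕ)`: for every sub-multiset, if one projection
is pairwise insummable then the other is summable (summability in `ℕ` is
automatic). -/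
def Adm {X : Type*} (x0 : X) (σ : Multiset (X × ℕ)) : Prop :=
  ∀ τ, τ ≤ σ →
    (PInsum x0 (τ.map Prod.fst) → True) ∧
    (PInsumNat (τ.map Prod.snd) → TrivSumm x0 (τ.map Prod.fst))

/-- The generating relations for `X ⊗ ℕ`: deleting pairs with a zero
coordinate, splitting the (trivial) sum in the `X`-coordinate, and splitting
the sum in the `ℕ`-coordinate. -/
inductive TRel {X : Type*} (x0 : X) :
    Multiset (X × ℕ) → Multiset (X × ℕ) → Prop
  | del (x n σ) : (x = x0 ∨ n = 0) → TRel x0 ((x, n) ::ₘ σ) σ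
  | splitX (x n σ) : TRel x0 ((x, n) ::ₘ σ) ((x, n) ::ₘ (x0, n) ::ₘ σ)
  | splitN (x m n σ) : TRel x0 ((x, m + n) ::ₘ σ) ((x, m) ::ₘ (x, n) ::ₘ σ)

/-- The least equivalence relation generated by the relations. -/
def Eqv {X : Type*} (x0 : X) : Multiset (X × ℕ) → Multiset (X × ℕ) → Prop :=
  Relation.EqvGen (TRel x0)

/-- The product `X ⊗ ℕ`: admissible multisets modulo the equivalence. -/
def Tensor {X : Type*} (x0 : X) : Type _ :=
  Quot (fun a b : {σ : Multiset (X × ℕ) // Adm x0 σ} => Eqv x0 a.1 b.1)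

section Aux

variable {X : Type*} (x0 : X)

open scoped Classical

/-- Every multiset is admissible, since `PInsumNat` forces cardinality `≤ 1`. -/
lemma adm_all (σ : Multiset (X × ℕ)) : Adm x0 σ := by
  classical
  intro τ _
  refine ⟨fun _ => trivial, fun h a b hab => ?_⟩
  exfalso
  have h2 : 2 ≤ τ.card := by
    have := Multiset.card_le_card hab
    simpa using this
  obtain ⟨c, τ', rfl⟩ : ∃ c τ', τ = c ::ₘ τ' := by
    have hne : τ ≠ 0 := by rintro rfl; simp at h2
    rcases Multiset.exists_mem_of_ne_zero hne with ⟨c, hc⟩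
    exact ⟨c, τ.erase c, (Multiset.cons_erase hc).symm⟩
  obtain ⟨d, τ'', rfl⟩ : ∃ d τ'', τ' = d ::ₘ τ'' := by
    have hne : τ' ≠ 0 := by rintro rfl; simp at h2
    rcases Multiset.exists_mem_of_ne_zero hne with ⟨d, hd⟩
    exact ⟨d, τ'.erase d, (Multiset.cons_erase hd).symm⟩
  exact h c.2 d.2 (by
    rw [Multiset.map_cons, Multiset.map_cons]
    exact Multiset.cons_le_cons _ (Multiset.cons_le_cons _ (Multiset.zero_le _)))

/-- Normal form: expand each pair `(x, n)` with `x ≠ x0` into `n` copies of `x`. -/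
noncomputable def nf (σ : Multiset (X × ℕ)) : Multiset X :=
  σ.bind fun p => if p.1 = x0 then 0 else Multiset.replicate p.2 p.1

lemma nf_zero : nf x0 (0 : Multiset (X × ℕ)) = 0 := rfl

lemma nf_cons (p : X × ℕ) (σ : Multiset (X × ℕ)) :
    nf x0 (p ::ₘ σ) =
      (if p.1 = x0 then 0 else Multiset.replicate p.2 p.1) + nf x0 σ :=
  Multiset.cons_bind _ _ _

lemma nf_trel {σ τ : Multiset (X × ℕ)} (h : TRel x0 σ τ) :
    nf x0 σ = nf x0 τ := by
  cases h with
  | del x n ρ h =>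
      rw [nf_cons]; rcases h with h | h <;> simp [h]
  | splitX x n ρ =>
      rw [nf_cons, nf_cons, nf_cons]; simp
  | splitN x m n ρ =>
      rw [nf_cons, nf_cons, nf_cons]
      by_cases hx : x = x0 <;> simp [hx, Multiset.replicate_add, add_assoc]

lemma nf_eqv {σ τ : Multiset (X × ℕ)} (h : Eqv x0 σ τ) :
    nf x0 σ = nf x0 τ := by
  induction h with
  | rel _ _ h => exact nf_trel x0 h
  | refl _ => rfl
  | symm _ _ _ ih => exact ih.symm
  | trans _ _ _ _ _ ih1 ih2 => exact ih1.trans ih2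

lemma trel_add {σ τ : Multiset (X × ℕ)} (c : Multiset (X × ℕ))
    (h : TRel x0 σ τ) : TRel x0 (σ + c) (τ + c) := by
  cases h with
  | del x n ρ h => simpa [Multiset.cons_add] using TRel.del x n (τ + c) h
  | splitX x n ρ => simpa [Multiset.cons_add] using TRel.splitX (x0 := x0) x n (ρ + c)
  | splitN x m n ρ => simpa [Multiset.cons_add] using TRel.splitN (x0 := x0) x m n (ρ + c)

lemma eqv_add {σ τ : Multiset (X × ℕ)} (c : Multiset (X × ℕ))
    (h : Eqv x0 σ τ) : Eqv x0 (c + σ) (c + τ) := by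
  induction h with
  | rel _ _ h =>
      rw [add_comm c, add_comm c]
      exact Relation.EqvGen.rel _ _ (trel_add x0 c h)
  | refl _ => exact Relation.EqvGen.refl _
  | symm _ _ _ ih => exact Relation.EqvGen.symm _ _ ih
  | trans _ _ _ _ _ ih1 ih2 => exact Relation.EqvGen.trans _ _ _ ih1 ih2

lemma eqv_cons_rep (x : X) (n : ℕ) (τ : Multiset (X × ℕ)) :
    Eqv x0 ((x, n) ::ₘ τ) (Multiset.replicate n (x, 1) + τ) := by
  induction n generalizing τ with
  | zero =>
      simpa [Eqv] using Relation.EqvGen.rel _ _ (TRel.del (x0 := x0) x 0 τ (Or.inr rfl))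
  | succ n ih =>
      have h1 : TRel x0 ((x, n + 1) ::ₘ τ) ((x, 1) ::ₘ (x, n) ::ₘ τ) := by
        have := TRel.splitN (x0 := x0) x 1 n τ
        rwa [Nat.add_comm 1 n] at this
      have h2 : Eqv x0 ((x, 1) ::ₘ (x, n) ::ₘ τ)
          (Multiset.replicate n (x, 1) + ((x, 1) ::ₘ τ)) := by
        rw [Multiset.cons_swap]
        exact ih ((x, 1) ::ₘ τ)
      have h3 : Multiset.replicate n (x, 1) + ((x, 1) ::ₘ τ) =
          Multiset.replicate (n + 1) (x, 1) + τ := by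
        rw [Multiset.replicate_succ, Multiset.cons_add, Multiset.add_cons]
      rw [h3] at h2
      exact Relation.EqvGen.trans _ _ _ (Relation.EqvGen.rel _ _ h1) h2

lemma eqv_nf (σ : Multiset (X × ℕ)) :
    Eqv x0 σ ((nf x0 σ).map fun x => (x, 1)) := by
  induction σ using Multiset.induction with
  | empty => exact Relation.EqvGen.refl _
  | cons p σ ih =>
      obtain ⟨x, n⟩ := p
      by_cases hx : x = x0
      · have h1 : TRel x0 ((x, n) ::ₘ σ) σ := TRel.del x n σ (Or.inl hx)
        have h2 : nf x0 ((x, n) ::ₘ σ) = nf x0 σ := by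
          rw [nf_cons]; simp [hx]
        rw [h2]
        exact Relation.EqvGen.trans _ _ _ (Relation.EqvGen.rel _ _ h1) ih
      · have h1 := eqv_cons_rep x0 x n σ
        have h2 : Eqv x0 (Multiset.replicate n (x, 1) + σ)
            (Multiset.replicate n (x, 1) + (nf x0 σ).map fun x => (x, 1)) :=
          eqv_add x0 _ ih
        have h3 : (nf x0 ((x, n) ::ₘ σ)).map (fun x => (x, 1)) =
            Multiset.replicate n (x, 1) + (nf x0 σ).map fun x => (x, 1) := by
          rw [nf_cons]; simp [hx, Multiset.map_replicate]
        rw [h3]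
        exact Relation.EqvGen.trans _ _ _ h1 h2

lemma nf_ne (σ : Multiset (X × ℕ)) : ∀ x ∈ nf x0 σ, x ≠ x0 := by
  intro x hx
  rw [nf, Multiset.mem_bind] at hx
  obtain ⟨p, _, hx⟩ := hx
  by_cases hp : p.1 = x0
  · simp [hp] at hx
  · simp only [if_neg hp, Multiset.mem_replicate] at hx
    rw [hx.2]; exact hp

lemma nf_map (l : Multiset X) (hl : ∀ x ∈ l, x ≠ x0) :
    nf x0 (l.map fun x => (x, 1)) = l := by
  induction l using Multiset.induction with
  | empty => rfl
  | cons a l ih =>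
      rw [Multiset.map_cons, nf_cons]
      have ha : a ≠ x0 := hl a (Multiset.mem_cons_self a l)
      simp only [if_neg ha]
      rw [ih fun x hx => hl x (Multiset.mem_cons_of_mem hx),
        Multiset.replicate_one, Multiset.singleton_add]

end Aux

/-- Every element of `X ⊗ ℕ` is represented by a multiset
`(x₁,1) ∔ ⋯ ∔ (x_k,1)` with the `xᵢ` non-basepoint; two such representatives
give the same class iff they agree as multisets of non-basepoint elements of
`X`; hence `X ⊗ ℕ` is in bijection with the set of finite multisets of
non-basepoint elements of `X` (the underlying set of `SP^∞(X)`). -/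
theorem tensor_nat_eq_sp {X : Type*} (x0 : X) :
    (∀ σ : Multiset (X × ℕ), Adm x0 σ →
      ∃ l : Multiset X, (∀ x ∈ l, x ≠ x0) ∧
        Eqv x0 σ (l.map fun x => (x, 1))) ∧
    (∀ l l' : Multiset X, (∀ x ∈ l, x ≠ x0) → (∀ x ∈ l', x ≠ x0) →
      (Eqv x0 (l.map fun x => (x, 1)) (l'.map fun x => (x, 1)) ↔ l = l')) ∧
    ∃ e : Tensor x0 ≃ {s : Multiset X // ∀ x ∈ s, x ≠ x0},
      ∀ (l : Multiset X) (hl : ∀ x ∈ l, x ≠ x0)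
        (h : Adm x0 (l.map fun x => (x, 1))),
        e (Quot.mk _ ⟨l.map fun x => (x, 1), h⟩) = ⟨l, hl⟩ := by
  refine ⟨fun σ _ => ⟨nf x0 σ, nf_ne x0 σ, eqv_nf x0 σ⟩, ?_, ?_⟩
  · intro l l' hl hl'
    constructor
    · intro h
      have := nf_eqv x0 h
      rwa [nf_map x0 l hl, nf_map x0 l' hl'] at this
    · rintro rfl; exact Relation.EqvGen.refl _
  · refine ⟨⟨Quot.lift (fun σ => ⟨nf x0 σ.1, nf_ne x0 σ.1⟩)
        (fun a b h => Subtype.ext (nf_eqv x0 h)),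
      fun s => Quot.mk _ ⟨s.1.map fun x => (x, 1), adm_all x0 _⟩, ?_, ?_⟩, ?_⟩
    · intro t
      induction t using Quot.ind with
      | _ σ => exact Quot.sound (Relation.EqvGen.symm _ _ (eqv_nf x0 σ.1))
    · intro s
      exact Subtype.ext (nf_map x0 s.1 s.2)
    · intro l hl h
      exact Subtype.ext (nf_map x0 l hl)
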